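/- Let L be a p/q-changemaker lattice with p > q ≥ 2, and suppose σ_i ≥ 1 for all 1 ≤ i ≤ t. Let 1 ≤ k ≤ t, let A ⊆ {1, …, k−1} and B ⊆ {0, …, s}, and suppose the vector z = −f_k + Σ_{i∈A} f_i + Σ_{j∈B} e_j lies in L. Then z is irreducible in L. -/

import Mathlib

/-- The negative continued fraction `[b_0, …, b_n]⁻ = b_0 - 1/[b_1, …, b_n]⁻`. -/
def cfMinus : List ℚ → ℚ
  | [] => 0
  | [b] => b
  | b :: c :: rest => b - 1 / cfMinus (c :: rest)

/-- The standard inner product on `ℤ^ι`. -/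
def dot {ι : Type*} [Fintype ι] (x y : ι → ℤ) : ℤ := ∑ i, x i * y i

/-- The basis vector `f_i` (indices shifted: `fvec t s i` is `f_{i+1}`). -/
def fvec (t s : ℕ) (i : Fin t) : Fin t ⊕ Fin (s + 1) → ℤ := Pi.single (Sum.inl i) 1

/-- The basis vector `e_j`, `0 ≤ j ≤ s`. -/
def evec (t s : ℕ) (j : Fin (s + 1)) : Fin t ⊕ Fin (s + 1) → ℤ := Pi.single (Sum.inr j) 1

/-- The changemaker vector `w_0 = e_0 + σ_1 f_1 + ⋯ + σ_t f_t`. -/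
def w0 (t s : ℕ) (σ : Fin t → ℤ) : Fin t ⊕ Fin (s + 1) → ℤ :=
  Sum.elim σ fun j => if (j : ℕ) = 0 then 1 else 0

/-- The vector `w_k = -e_{m_{k-1}} + e_{m_{k-1}+1} + ⋯ + e_{m_k}` for `k ≥ 1`. -/
def wk (t s : ℕ) (m : ℕ → ℕ) (k : ℕ) : Fin t ⊕ Fin (s + 1) → ℤ :=
  Sum.elim 0 fun j =>
    if (j : ℕ) = m (k - 1) then -1
    else if m (k - 1) < (j : ℕ) ∧ (j : ℕ) ≤ m k then 1 else 0

/-- The vectors `w_0, w_1, …, w_l`. -/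
def wvec (t s : ℕ) (σ : Fin t → ℤ) (m : ℕ → ℕ) (k : ℕ) : Fin t ⊕ Fin (s + 1) → ℤ :=
  if k = 0 then w0 t s σ else wk t s m k

/-- The `p/q`-changemaker lattice `L = ⟨w_0, …, w_l⟩^⊥ ⊆ ℤ^{t+s+1}`. -/
def Lset (t s l : ℕ) (σ : Fin t → ℤ) (m : ℕ → ℕ) : Set (Fin t ⊕ Fin (s + 1) → ℤ) :=
  {x | ∀ k ≤ l, dot x (wvec t s σ m k) = 0}

/-- The fractional part `L_F = ⟨w_1, …, w_l⟩^⊥ ∩ ⟨e_0, …, e_s⟩`. -/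
def LFset (t s l : ℕ) (m : ℕ → ℕ) : Set (Fin t ⊕ Fin (s + 1) → ℤ) :=
  {x | (∀ i, x (Sum.inl i) = 0) ∧ ∀ k, 1 ≤ k → k ≤ l → dot x (wk t s m k) = 0}

/-- The index set `M = {0, 1, …, s} ∖ {m_0, m_1, …, m_l}`. -/
def Mset (s l : ℕ) (m : ℕ → ℕ) : Finset ℕ :=
  (Finset.range (s + 1)).filter fun j => ∀ k ≤ l, j ≠ m k

/-- The least element of `M` (equal to `s` if `M = ∅`). -/
def minM (s l : ℕ) (m : ℕ → ℕ) : ℕ :=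
  if h : (Mset s l m).Nonempty then (Mset s l m).min' h else s

/-- For `k ∈ M`, the least element `k'` of `M` greater than `k`; equal to `s`
if no such element exists. -/
def nxt (s l : ℕ) (m : ℕ → ℕ) (k : ℕ) : ℕ :=
  if h : ((Mset s l m).filter fun j => k < j).Nonempty then
    ((Mset s l m).filter fun j => k < j).min' h
  else s

/-- `v_0 = e_0 + e_1 + ⋯ + e_{min M}` (equal to `e_0 + ⋯ + e_s` if `M = ∅`). -/
def v0vec (t s l : ℕ) (m : ℕ → ℕ) : Fin t ⊕ Fin (s + 1) → ℤ :=
  Sum.elim 0 fun j => if (j : ℕ) ≤ minM s l m then 1 else 0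

/-- `v'_k = -e_k + e_{k+1} + ⋯ + e_{k'}` for `k ∈ M`. -/
def vKvec (t s l : ℕ) (m : ℕ → ℕ) (k : ℕ) : Fin t ⊕ Fin (s + 1) → ℤ :=
  Sum.elim 0 fun j =>
    if (j : ℕ) = k then -1
    else if k < (j : ℕ) ∧ (j : ℕ) ≤ nxt s l m k then 1 else 0

/-- The sequence `v_0, v_1, …, v_m` (`m = |M|`): `v_0` as above, and
`v_1, …, v_m` are the vectors `v'_k`, `k ∈ M`, in increasing order of `k`. -/
def vSeq (t s l : ℕ) (m : ℕ → ℕ) (i : ℕ) : Fin t ⊕ Fin (s + 1) → ℤ :=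
  if i = 0 then v0vec t s l m
  else vKvec t s l m (((Mset s l m).sort (· ≤ ·)).getD (i - 1) 0)

/-- `x_F = Σ_{j=0}^s (x·e_j) e_j`, the projection to the span of the `e_j`. -/
def Fpart (t s : ℕ) (x : Fin t ⊕ Fin (s + 1) → ℤ) : Fin t ⊕ Fin (s + 1) → ℤ :=
  ∑ j, dot x (evec t s j) • evec t s j

/-- `z` is irreducible in the lattice `S`: there are no nonzero `x, y ∈ S`
with `z = x + y` and `x·y ≥ 0`. -/
def IrredIn {ι : Type*} [Fintype ι] (S : Set (ι → ℤ)) (z : ι → ℤ) : Prop :=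
  ¬ ∃ x y : ι → ℤ, x ∈ S ∧ y ∈ S ∧ x ≠ 0 ∧ y ≠ 0 ∧ z = x + y ∧ 0 ≤ dot x y

/-- The data `(t, s, l, a, m, σ)` presents the `p/q`-changemaker lattice
`⟨w_0, …, w_l⟩^⊥ ⊆ ℤ^{t+s+1}`, where `p/q = n − r/q = [a_0, a_1, …, a_l]⁻` with
`a_0 = n`, `a_k ≥ 2` for `1 ≤ k ≤ l`; `m_0 = 0`, `m_k = a_1 + ⋯ + a_k − k`,
`s = m_l`; and `(σ_1, …, σ_t)` is a nondecreasing tuple of nonnegative integers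
satisfying the changemaker condition with `w_0·w_0 = 1 + Σ σ_i² = n`. -/
structure IsCMLattice (p q n r : ℤ) (t s l : ℕ) (a : ℕ → ℤ) (m : ℕ → ℕ)
    (σ : Fin t → ℤ) : Prop where
  hq2 : 2 ≤ q
  hqp : q < p
  hgcd : Int.gcd p q = 1
  hp : p = n * q - r
  hr0 : 0 < r
  hrq : r < q
  ha0 : a 0 = n
  hak : ∀ k, 1 ≤ k → k ≤ l → 2 ≤ a k
  hcf : cfMinus ((List.range (l + 1)).map fun i => (a i : ℚ)) = (p : ℚ) / (q : ℚ)
  hm0 : m 0 = 0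
  hmrec : ∀ k, 1 ≤ k → k ≤ l → (m k : ℤ) = (m (k - 1) : ℤ) + a k - 1
  hs : s = m l
  hσ0 : ∀ i, 0 ≤ σ i
  hσmono : Monotone σ
  hσcm : ∀ i : Fin t, σ i ≤ (∑ j ∈ Finset.univ.filter (· < i), σ j) + 1
  hσn : 1 + ∑ i, σ i ^ 2 = n

/-- Lemma 6.5 of the paper: if `σ_i ≥ 1` for all `i`, then any vector of the
form `z = -f_k + Σ_{i∈A} f_i + Σ_{j∈B} e_j ∈ L`, with `A ⊆ {1, …, k-1}` and
`B ⊆ {0, …, s}`, is irreducible in `L`. -/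
theorem stmt_8 (p q n r : ℤ) (t s l : ℕ) (a : ℕ → ℤ) (m : ℕ → ℕ) (σ : Fin t → ℤ)
    (h : IsCMLattice p q n r t s l a m σ) (hσ1 : ∀ i, 1 ≤ σ i)
    (k : Fin t) (A : Finset (Fin t)) (hA : ∀ i ∈ A, i < k) (B : Finset (Fin (s + 1)))
    (z : Fin t ⊕ Fin (s + 1) → ℤ)
    (hz : z = -fvec t s k + (∑ i ∈ A, fvec t s i) + ∑ j ∈ B, evec t s j)
    (hzL : z ∈ Lset t s l σ m) :
    IrredIn (Lset t s l σ m) z := by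
  
  have hkA : k ∉ A := fun hk => absurd (hA k hk) (lt_irrefl k)
  have hzl : ∀ i : Fin t, z (Sum.inl i) =
      (if i ∈ A then (1:ℤ) else 0) - (if i = k then 1 else 0) := by
    intro i
    simp [hz, fvec, evec, Pi.single_apply, Finset.sum_ite_eq']; ring
  have hzr : ∀ j : Fin (s+1), z (Sum.inr j) = if j ∈ B then 1 else 0 := by
    intro j
    simp [hz, fvec, evec, Pi.single_apply, Finset.sum_ite_eq']
  rintro ⟨x, y, hxL, hyL, hx0, hy0, hzxy, hxy⟩
  have hsum : ∀ u, x u + y u = z u := by intro u; rw [hzxy]; simp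
  have hzb : ∀ u, -1 ≤ z u ∧ z u ≤ 1 := by
    rintro (i | j)
    · rw [hzl i]; split_ifs <;> omega
    · rw [hzr j]; split_ifs <;> omega
  have hnp : ∀ u ∈ Finset.univ, x u * y u ≤ 0 := by
    intro u _
    by_contra hpos
    push_neg at hpos
    rcases mul_pos_iff.mp hpos with ⟨h1, h2⟩ | ⟨h1, h2⟩ <;>
      · have h3 := hsum u; have h4 := hzb u; omega
  have hd0 : dot x y = 0 := le_antisymm (Finset.sum_nonpos hnp) hxy
  have hprod : ∀ u, x u * y u = 0 := fun u =>
    (Finset.sum_eq_zero_iff_of_nonpos hnp).mp hd0 u (Finset.mem_univ u)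
  have key : ∀ w : Fin t ⊕ Fin (s+1) → ℤ, w ∈ Lset t s l σ m →
      (∀ u, w u = 0 ∨ w u = z u) → w (Sum.inl k) = 0 → w = 0 := by
    intro w hwL hwz hwk0
    have hw0 := hwL 0 (Nat.zero_le l)
    rw [show wvec t s σ m 0 = w0 t s σ from if_pos rfl] at hw0
    unfold dot at hw0
    have hnn0 : ∀ u ∈ Finset.univ, (0:ℤ) ≤ w u * w0 t s σ u := by
      rintro (i | j) -
      · simp only [w0, Sum.elim_inl]
        rcases eq_or_ne i k with rfl | hik
        · rw [hwk0, zero_mul]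
        · rcases hwz (Sum.inl i) with hh | hh
          · rw [hh, zero_mul]
          · rw [hh, hzl i, if_neg hik]
            have := h.hσ0 i
            split_ifs <;> simp <;> omega
      · simp only [w0, Sum.elim_inr]
        rcases hwz (Sum.inr j) with hh | hh
        · rw [hh, zero_mul]
        · rw [hh, hzr j]; split_ifs <;> simp
    have hall0 := (Finset.sum_eq_zero_iff_of_nonneg hnn0).mp hw0
    have hwl : ∀ i : Fin t, w (Sum.inl i) = 0 := by
      intro i
      have h1 := hall0 (Sum.inl i) (Finset.mem_univ _)
      simp only [w0, Sum.elim_inl] at h1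
      have hσ := hσ1 i
      rcases mul_eq_zero.mp h1 with hh | hh
      · exact hh
      · omega
    have hE : ∀ c, c ≤ l → ∀ j : Fin (s+1), (j:ℕ) ≤ m c → w (Sum.inr j) = 0 := by
      intro c
      induction c with
      | zero =>
        intro _ j hj
        rw [h.hm0] at hj
        have hj0 : (j:ℕ) = 0 := Nat.le_zero.mp hj
        have h1 := hall0 (Sum.inr j) (Finset.mem_univ _)
        simp only [w0, Sum.elim_inr, hj0, if_pos, mul_one] at h1
        exact h1
      | succ c ih =>
        intro hcl j hj
        have hcl' : c ≤ l := Nat.le_of_succ_le hcl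
        have ihc := ih hcl'
        rcases le_or_gt (j:ℕ) (m c) with hle | hlt
        · exact ihc j hle
        have hwc := hwL (c+1) hcl
        rw [show wvec t s σ m (c+1) = wk t s m (c+1) from if_neg (Nat.succ_ne_zero c)] at hwc
        unfold dot at hwc
        have hnn : ∀ u ∈ Finset.univ, (0:ℤ) ≤ w u * wk t s m (c+1) u := by
          rintro (i | j') -
          · simp [wk]
          · simp only [wk, Sum.elim_inr, Nat.add_sub_cancel]
            by_cases h1 : (j' : ℕ) = m c
            · rw [if_pos h1, ihc j' (le_of_eq h1), zero_mul]
            · rw [if_neg h1]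
              by_cases h2 : m c < (j' : ℕ) ∧ (j' : ℕ) ≤ m (c+1)
              · rw [if_pos h2, mul_one]
                rcases hwz (Sum.inr j') with hh | hh
                · rw [hh]
                · rw [hh, hzr j']; split_ifs <;> simp
              · rw [if_neg h2, mul_zero]
        have h1 := (Finset.sum_eq_zero_iff_of_nonneg hnn).mp hwc (Sum.inr j) (Finset.mem_univ _)
        simp only [wk, Sum.elim_inr, Nat.add_sub_cancel] at h1
        rw [if_neg (by omega : (j:ℕ) ≠ m c), if_pos ⟨hlt, hj⟩, mul_one] at h1
        exact h1
    funext u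
    rcases u with i | j
    · exact hwl i
    · exact hE l le_rfl j (by rw [← h.hs]; exact Nat.lt_succ_iff.mp j.isLt)
  have hzk : z (Sum.inl k) = -1 := by rw [hzl k]; simp [hkA]
  have hk' := hprod (Sum.inl k)
  rcases mul_eq_zero.mp hk' with hxk | hyk
  · refine hx0 (key x hxL ?_ hxk)
    intro u
    rcases mul_eq_zero.mp (hprod u) with hh | hh
    · exact Or.inl hh
    · right; have := hsum u; omega
  · refine hy0 (key y hyL ?_ hyk)
    intro u
    rcases mul_eq_zero.mp (hprod u) with hh | hh
    · right; have := hsum u; omega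
    · exact Or.inl hh
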